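/- For every ρ* > 0 there exists a constant C > 0 depending only on ρ* such that for all integers i', j' and every v ∈ ℝ²: v·(B_C[i', j'] v) ≥ C·((i')² + (j')²)·|v|². In particular the smallest eigenvalue of the real symmetric matrix B_C[i', j'] is at least C·((i')² + (j')²). -/

import Mathlib

noncomputable section
open Real Matrix Finset

/-- counterclockwise rotation by π/2 -/
def perp (l : Fin 2 → ℝ) : Fin 2 → ℝ := ![-(l 1), l 0]

/-- triangular-lattice direction l₁ = (1/2, −√3/2) -/
def tl1 : Fin 2 → ℝ := ![1/2, -(Real.sqrt 3)/2]
/-- triangular-lattice direction l₂ = (1, 0) -/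
def tl2 : Fin 2 → ℝ := ![1, 0]
/-- triangular-lattice direction l₃ = (1/2, √3/2) -/
def tl3 : Fin 2 → ℝ := ![1/2, Real.sqrt 3 / 2]

/-- the block ρ l lᵀ + 12 l⊥ l⊥ᵀ -/
def blk (ρ : ℝ) (l : Fin 2 → ℝ) : Matrix (Fin 2) (Fin 2) ℝ :=
  ρ • vecMulVec l l + (12:ℝ) • vecMulVec (perp l) (perp l)

/-- the continuum matrix A_C[i', j'] -/
def AC (ρ : ℝ) (i j : ℤ) : Matrix (Fin 2) (Fin 2) ℝ :=
  (4 * π^2 * (i:ℝ)^2) • blk ρ tl1 + (4 * π^2 * ((i:ℝ)+(j:ℝ))^2) • blk ρ tl2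
  + (4 * π^2 * (j:ℝ)^2) • blk ρ tl3

/-- the continuum vector d_C[i', j'] -/
def dC (i j : ℤ) : Fin 2 → ℝ :=
  (24 * π) • ((i:ℝ) • perp tl1 + ((i:ℝ)+(j:ℝ)) • perp tl2 + (j:ℝ) • perp tl3)

/-- the continuum Schur complement B_C[i', j'] = A_C − (1/36) d_C d_Cᵀ -/
def BC (ρ : ℝ) (i j : ℤ) : Matrix (Fin 2) (Fin 2) ℝ :=
  AC ρ i j - (1/36 : ℝ) • vecMulVec (dC i j) (dC i j)

set_option maxHeartbeats 1000000 in
/-- coercivity of the continuum Schur complement B_C: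
for every ρ* > 0 there is C > 0 depending only on ρ* such that for all
integers i', j' and every v ∈ ℝ², v·(B_C[i',j'] v) ≥ C((i')² + (j')²)|v|²;
in particular the smallest eigenvalue of B_C[i',j'] is at least
C((i')² + (j')²). -/
theorem coercive_BC (ρ : ℝ) (hρ : 0 < ρ) :
    ∃ C > 0, ∀ i j : ℤ, ∀ v : Fin 2 → ℝ,
      C * ((i:ℝ)^2 + (j:ℝ)^2) * (v ⬝ᵥ v) ≤ v ⬝ᵥ (BC ρ i j).mulVec v := by
  refine ⟨12 * π^2, by positivity, ?_⟩
  intro i j v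
  set a : ℝ := (i:ℝ)
  set b : ℝ := (j:ℝ)
  set x : ℝ := v 0
  set y : ℝ := v 1
  set s : ℝ := Real.sqrt 3 with hsdef
  have hs : s * s = 3 := Real.mul_self_sqrt (by norm_num)
  have key : v ⬝ᵥ (BC ρ i j).mulVec v
      = 4 * π^2 * (ρ * ((5/4*a^2 + 2*a*b + 5/4*b^2) * x^2
          + 3/4*(a^2+b^2)*y^2 + s/2*(b^2-a^2)*x*y)
        + 6*(a^2+a*b+b^2)*(x^2+y^2)) := by
    simp only [BC, AC, dC, blk, perp, tl1, tl2, tl3, Matrix.mulVec, Matrix.sub_apply,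
      Matrix.add_apply, Matrix.smul_apply, vecMulVec_apply, dotProduct,
      Fin.sum_univ_two, Pi.smul_apply, Pi.add_apply, smul_eq_mul,
      Matrix.cons_val_zero, Matrix.cons_val_one, Matrix.head_cons]
    linear_combination (4*π^2 * (ρ/4*(a^2+b^2)*y^2 + 2*(a^2+a*b+b^2)*x^2)) * hs
  have hT : 0 ≤ 9*(a^2+b^2)^2*y^2 + 3*(b^2-a^2)^2*x^2
      + 6*s*(a^2+b^2)*(b^2-a^2)*x*y := by
    have e : 9*(a^2+b^2)^2*y^2 + 3*(b^2-a^2)^2*x^2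
        + 6*s*(a^2+b^2)*(b^2-a^2)*x*y
        = (3*(a^2+b^2)*y + s*(b^2-a^2)*x)^2 := by
      linear_combination (-((b^2-a^2)^2*x^2)) * hs
    rw [e]; exact sq_nonneg _
  have hP : 0 ≤ (5/4*a^2 + 2*a*b + 5/4*b^2) * x^2
      + 3/4*(a^2+b^2)*y^2 + s/2*(b^2-a^2)*x*y := by
    rcases (by positivity : (0:ℝ) ≤ a^2+b^2).eq_or_lt with h0 | hpos
    · have ha : a = 0 := by nlinarith [sq_nonneg a, sq_nonneg b]
      have hb : b = 0 := by nlinarith [sq_nonneg a, sq_nonneg b]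
      rw [ha, hb]; norm_num
    · nlinarith [hT, sq_nonneg ((a^2+a*b+b^2)*x), hpos]
  have hvv : v ⬝ᵥ v = x^2 + y^2 := by
    simp [dotProduct, Fin.sum_univ_two, sq]; rfl
  rw [key, hvv]
  have hπ : (0:ℝ) < π^2 := by positivity
  nlinarith [mul_nonneg (mul_nonneg (le_of_lt hπ) hρ.le) hP,
    mul_nonneg hπ.le (mul_nonneg (sq_nonneg (a+b)) (add_nonneg (sq_nonneg x) (sq_nonneg y)))]
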